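/- arXiv:0905.0933 — 3 statements merged into one kernel-verified Lean document; each statement's English description precedes it below -/
import Mathlib

section
/- Let ρ be a positive semidefinite Hermitian N×N matrix and T a symmetric unitary N×N matrix (T = Tᵀ). Then the matrix R = ρ T ρ* T† (where ρ* is the entrywise complex conjugate) has only real nonnegative eigenvalues; indeed R is similar to the positive semidefinite matrix (ρ^{1/2} T ρ*^{1/2})(ρ^{1/2} T ρ*^{1/2})†. -/
open scoped ComplexConjugate
open Matrix
open scoped ComplexOrder

/-- The positive semidefinite square root of a positive semidefinite matrix
(the definition Mathlib had in December 2024, since removed). -/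
noncomputable def Matrix.PosSemidef.sqrt {n 𝕜 : Type*} [Fintype n] [DecidableEq n] [RCLike 𝕜]
    {A : Matrix n n 𝕜} (hA : A.PosSemidef) : Matrix n n 𝕜 :=
  (hA.1.eigenvectorUnitary : Matrix n n 𝕜) * diagonal ((↑) ∘ (√·) ∘ hA.1.eigenvalues) *
    (star (hA.1.eigenvectorUnitary : Matrix n n 𝕜))

lemma Matrix.PosSemidef.posSemidef_sqrt {n 𝕜 : Type*} [Fintype n] [DecidableEq n] [RCLike 𝕜]
    {A : Matrix n n 𝕜} (hA : A.PosSemidef) : hA.sqrt.PosSemidef := by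
  unfold Matrix.PosSemidef.sqrt
  have hd : (diagonal ((↑) ∘ (√·) ∘ hA.1.eigenvalues) : Matrix n n 𝕜).PosSemidef := by
    rw [posSemidef_diagonal_iff]; intro i
    simp only [Function.comp_apply, RCLike.ofReal_nonneg, Real.sqrt_nonneg]
  rw [Matrix.star_eq_conjTranspose]
  exact hd.mul_mul_conjTranspose_same _

lemma Matrix.PosSemidef.sqrt_mul_self {n 𝕜 : Type*} [Fintype n] [DecidableEq n] [RCLike 𝕜]
    {A : Matrix n n 𝕜} (hA : A.PosSemidef) : hA.sqrt * hA.sqrt = A := by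
  unfold Matrix.PosSemidef.sqrt
  have hU : star (hA.1.eigenvectorUnitary : Matrix n n 𝕜) * (hA.1.eigenvectorUnitary : Matrix n n 𝕜) = 1 :=
    (Matrix.mem_unitaryGroup_iff').mp hA.1.eigenvectorUnitary.2
  conv_rhs => rw [hA.1.spectral_theorem]
  simp only [Unitary.conjStarAlgAut_apply, mul_assoc]
  rw [← mul_assoc (star _) _ (_ * star _), hU, one_mul, ← mul_assoc (diagonal _) (diagonal _),
    diagonal_mul_diagonal]
  congr 3
  funext i
  simp only [Function.comp_apply]
  rw [← RCLike.ofReal_mul, Real.mul_self_sqrt (hA.eigenvalues_nonneg i)]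

lemma diag_sq_similar {n : ℕ} (d : Fin n → ℝ) (Q : Matrix (Fin n) (Fin n) ℂ)
    (hQ : Q.PosSemidef) :
    ∃ S : Matrix (Fin n) (Fin n) ℂ, IsUnit S.det ∧
      Matrix.diagonal (fun i => (d i : ℂ)) * Matrix.diagonal (fun i => (d i : ℂ)) * Q =
        S * (Matrix.diagonal (fun i => (d i : ℂ)) * Q * Matrix.diagonal (fun i => (d i : ℂ))) * S⁻¹ := by
  set D : Matrix (Fin n) (Fin n) ℂ := Matrix.diagonal (fun i => (d i : ℂ)) with hDdef
  set P : Matrix (Fin n) (Fin n) ℂ := Matrix.diagonal (fun i => if d i = 0 then (1:ℂ) else 0) with hPdef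
  set E : Matrix (Fin n) (Fin n) ℂ := Matrix.diagonal (fun i => if d i = 0 then (1:ℂ) else (d i : ℂ)) with hEdef
  have hDP : D * P = 0 := by
    rw [hDdef, hPdef, diagonal_mul_diagonal]
    refine (congrArg Matrix.diagonal ?_).trans Matrix.diagonal_zero
    funext i; by_cases h : d i = 0 <;> simp [h]
  have hPD : P * D = 0 := by
    rw [hDdef, hPdef, diagonal_mul_diagonal]
    refine (congrArg Matrix.diagonal ?_).trans Matrix.diagonal_zero
    funext i; by_cases h : d i = 0 <;> simp [h]
  have hPP : P * P = P := by
    rw [hPdef, diagonal_mul_diagonal]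
    refine congrArg Matrix.diagonal ?_
    funext i; by_cases h : d i = 0 <;> simp [h]
  have hED : E * D = D * D := by
    rw [hDdef, hEdef, diagonal_mul_diagonal, diagonal_mul_diagonal]
    refine congrArg Matrix.diagonal ?_
    funext i; by_cases h : d i = 0 <;> simp [h]
  have hE' : E = D + P := by
    rw [hDdef, hEdef, hPdef, Matrix.diagonal_add]
    refine congrArg Matrix.diagonal ?_
    funext i; by_cases h : d i = 0 <;> simp [h]
  have hEdet : IsUnit E.det := by
    rw [hEdef, Matrix.det_diagonal]
    refine isUnit_iff_ne_zero.mpr (Finset.prod_ne_zero_iff.mpr fun i _ => ?_)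
    by_cases h : d i = 0 <;> simp [h]
  have hDH : Dᴴ = D := by
    rw [hDdef, Matrix.diagonal_conjTranspose]
    refine congrArg Matrix.diagonal ?_
    funext i; simp [Pi.star_apply, Complex.conj_ofReal]
  -- square root of Q
  set G : Matrix (Fin n) (Fin n) ℂ := hQ.sqrt with hGdef
  have hGG : G * G = Q := hQ.sqrt_mul_self
  have hGH : Gᴴ = G := hQ.posSemidef_sqrt.isHermitian
  clear_value G
  clear_value D P E
  set K : Matrix (Fin n) (Fin n) ℂ := D * G with hKdef
  have hKt : Kᴴ = G * D := by rw [hKdef, Matrix.conjTranspose_mul, hGH, hDH]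
  clear_value K
  set J : Matrix (Fin n) (Fin n) ℂ := Kᴴ * K with hJdef
  have hJps : J.PosSemidef := hJdef ▸ Matrix.posSemidef_conjTranspose_mul_self K
  have hJ : J.IsHermitian := hJps.isHermitian
  clear_value J
  set V : Matrix (Fin n) (Fin n) ℂ := (hJ.eigenvectorUnitary : Matrix (Fin n) (Fin n) ℂ) with hVdef
  set μ : Fin n → ℝ := hJ.eigenvalues with hμdef
  have hV1 : V * Vᴴ = 1 := by
    rw [hVdef]
    simpa [Matrix.star_eq_conjTranspose] using
      (Matrix.mem_unitaryGroup_iff).mp hJ.eigenvectorUnitary.2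
  have hV2 : Vᴴ * V = 1 := by
    rw [hVdef]
    simpa [Matrix.star_eq_conjTranspose] using
      (Matrix.mem_unitaryGroup_iff').mp hJ.eigenvectorUnitary.2
  have hJspec : J = V * Matrix.diagonal (fun i => (μ i : ℂ)) * Vᴴ := by
    rw [hVdef, hμdef]
    exact hJ.spectral_theorem
  clear_value V μ
  have hVX : ∀ X : Matrix (Fin n) (Fin n) ℂ, Vᴴ * (V * X) = X := fun X => by
    rw [← mul_assoc, hV2, one_mul]
  have hdiagmul : ∀ f g : Fin n → ℂ,
      (V * Matrix.diagonal f * Vᴴ) * (V * Matrix.diagonal g * Vᴴ) =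
        V * Matrix.diagonal (fun i => f i * g i) * Vᴴ := by
    intro f g
    simp only [mul_assoc, hVX]
    rw [← mul_assoc (Matrix.diagonal f) (Matrix.diagonal g) Vᴴ, diagonal_mul_diagonal]
  set Jp : Matrix (Fin n) (Fin n) ℂ :=
    V * Matrix.diagonal (fun i => ((if μ i = 0 then 0 else (μ i)⁻¹ : ℝ) : ℂ)) * Vᴴ with hJpdef
  set Pr : Matrix (Fin n) (Fin n) ℂ :=
    V * Matrix.diagonal (fun i => if μ i = 0 then (0:ℂ) else 1) * Vᴴ with hPrdef
  clear_value Jp Pr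
  have hJJp : J * Jp = Pr := by
    rw [hJspec, hJpdef, hdiagmul, hPrdef]
    have hfun : (fun i => (μ i : ℂ) * ((if μ i = 0 then 0 else (μ i)⁻¹ : ℝ) : ℂ)) =
        (fun i => if μ i = 0 then (0:ℂ) else 1) := by
      funext i
      by_cases h : μ i = 0
      · simp [h]
      · simp only [h, if_false]
        rw [← Complex.ofReal_mul, mul_inv_cancel₀ h, Complex.ofReal_one]
    rw [hfun]
  have hJPr : J * Pr = J := by
    rw [hJspec, hPrdef, hdiagmul]
    have hfun : (fun i => (μ i : ℂ) * (if μ i = 0 then (0:ℂ) else 1)) =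
        (fun i => (μ i : ℂ)) := by
      funext i
      by_cases h : μ i = 0 <;> simp [h]
    rw [hfun]
  have hKPr : K * Pr = K := by
    have h1 : J * (Pr - 1) = 0 := by rw [mul_sub, mul_one, hJPr, sub_self]
    have h2 : (K * (Pr - 1))ᴴ * (K * (Pr - 1)) = 0 := by
      rw [Matrix.conjTranspose_mul, mul_assoc, ← mul_assoc Kᴴ K (Pr - 1),
        ← hJdef, h1, mul_zero]
    have h3 : K * (Pr - 1) = 0 := Matrix.conjTranspose_mul_self_eq_zero.mp h2
    rw [mul_sub, mul_one] at h3
    exact sub_eq_zero.mp h3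
  -- the correction matrix
  set C : Matrix (Fin n) (Fin n) ℂ := -(G * P) with hCdef
  set W₀ : Matrix (Fin n) (Fin n) ℂ := K * (Jp * C) with hW₀def
  clear_value C W₀
  have hsolve : (K * Kᴴ) * W₀ = K * C := by
    have h1 : (K * Kᴴ) * W₀ = K * (J * Jp * C) := by
      rw [hW₀def, hJdef]; simp only [mul_assoc]
    rw [h1, hJJp, ← mul_assoc, hKPr]
  have hKKH : K * Kᴴ = D * Q * D := by
    rw [hKt, hKdef, ← mul_assoc, mul_assoc D G G, hGG]
  have hKC : K * C = -(D * Q * P) := by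
    rw [hCdef, hKdef, mul_neg]
    congr 1
    rw [mul_assoc, ← mul_assoc G G P, hGG, mul_assoc]
  set Z : Matrix (Fin n) (Fin n) ℂ := ((1 - P) * W₀) * P with hZdef
  clear_value Z
  have hP1PX : ∀ X : Matrix (Fin n) (Fin n) ℂ, P * ((1 - P) * X) = 0 := fun X => by
    rw [← mul_assoc, mul_sub, mul_one, hPP, sub_self, zero_mul]
  have hZZ : Z * Z = 0 := by
    rw [hZdef]
    simp only [mul_assoc, hP1PX, mul_zero]
  have hS₂ : (1 + Z) * (1 - Z) = 1 := by
    have h : (1 + Z) * (1 - Z) = 1 - Z * Z := by noncomm_ring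
    rw [h, hZZ, sub_zero]
  have hZdet : IsUnit (1 + Z).det := Matrix.isUnit_det_of_right_inverse hS₂
  have hZinv : (1 + Z)⁻¹ = 1 - Z := Matrix.inv_eq_right_inv hS₂
  have hDQPZ : (D * Q * P) * Z = 0 := by
    rw [hZdef]
    simp only [mul_assoc, hP1PX, mul_zero]
  have hDQDZ : (D * Q * D) * Z = -(D * Q * P) := by
    have e1 : (D * Q * D) * (1 - P) = D * Q * D := by
      rw [mul_sub, mul_one, mul_assoc (D * Q) D P, hDP, mul_zero, sub_zero]
    calc (D * Q * D) * Z = (((D * Q * D) * (1 - P)) * W₀) * P := by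
          rw [hZdef]; simp only [mul_assoc]
      _ = ((D * Q * D) * W₀) * P := by rw [e1]
      _ = (K * C) * P := by rw [← hKKH, hsolve]
      _ = -(D * Q * P) := by
          rw [hKC, neg_mul, mul_assoc (D * Q) P P, hPP]
  have hZDQD : Z * (D * Q * D) = 0 := by
    have hPDX : ∀ X : Matrix (Fin n) (Fin n) ℂ, P * (D * X) = 0 := fun X => by
      rw [← mul_assoc, hPD, zero_mul]
    rw [hZdef]
    simp only [mul_assoc, hPDX, mul_zero]
  have keyc : (D * Q * D + D * Q * P) * (1 + Z) = (1 + Z) * (D * Q * D) := by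
    rw [mul_add, mul_one, add_mul, hDQDZ, hDQPZ, add_mul, one_mul, hZDQD]
    abel
  have similar2 : D * Q * E = (1 + Z) * (D * Q * D) * (1 + Z)⁻¹ := by
    have hDQE : D * Q * E = D * Q * D + D * Q * P := by rw [hE', mul_add]
    calc D * Q * E = (D * Q * E) * ((1 + Z) * (1 + Z)⁻¹) := by
          rw [Matrix.mul_nonsing_inv _ hZdet, mul_one]
      _ = ((D * Q * E) * (1 + Z)) * (1 + Z)⁻¹ := by rw [← mul_assoc]
      _ = ((1 + Z) * (D * Q * D)) * (1 + Z)⁻¹ := by rw [hDQE, keyc]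
  refine ⟨E * (1 + Z), ?_, ?_⟩
  · rw [Matrix.det_mul]; exact hEdet.mul hZdet
  · have hEinv : E * E⁻¹ = 1 := Matrix.mul_nonsing_inv _ hEdet
    calc D * D * Q = (E * D) * Q * (E * E⁻¹) := by rw [hEinv, mul_one, hED]
      _ = E * ((D * Q * E) * E⁻¹) := by simp only [mul_assoc]
      _ = E * (((1 + Z) * (D * Q * D) * (1 + Z)⁻¹) * E⁻¹) := by rw [← similar2]
      _ = (E * (1 + Z)) * (D * Q * D) * ((E * (1 + Z))⁻¹) := by
          rw [Matrix.mul_inv_rev]; simp only [mul_assoc]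


/-- For ρ positive semidefinite and T a symmetric unitary, R = ρ T ρ* T† has only
real nonnegative eigenvalues; indeed R is similar to the positive semidefinite
matrix (ρ^{1/2} T ρ*^{1/2})(ρ^{1/2} T ρ*^{1/2})†. -/
theorem stmt3 (N : ℕ) (ρ T : Matrix (Fin N) (Fin N) ℂ)
    (hρ : ρ.PosSemidef) (hρc : (ρ.map (starRingEnd ℂ)).PosSemidef)
    (hT : T ∈ Matrix.unitaryGroup (Fin N) ℂ) (hTsymm : Tᵀ = T)
    (R : Matrix (Fin N) (Fin N) ℂ)
    (hR : R = ρ * (T * ρ.map (starRingEnd ℂ) * Tᴴ)) :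
    (∀ μ ∈ spectrum ℂ R, ∃ t : ℝ, 0 ≤ t ∧ μ = (t : ℂ)) ∧
    ∃ S : Matrix (Fin N) (Fin N) ℂ, IsUnit S.det ∧
      R = S * ((hρ.sqrt * T * hρc.sqrt) * (hρ.sqrt * T * hρc.sqrt)ᴴ) * S⁻¹ := by
  have hAH : (hρ.sqrt).IsHermitian := hρ.posSemidef_sqrt.isHermitian
  have hA2 : hρ.sqrt * hρ.sqrt = ρ := hρ.sqrt_mul_self
  have hB2 : hρc.sqrt * hρc.sqrt = ρ.map (starRingEnd ℂ) := hρc.sqrt_mul_self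
  have hBH : (hρc.sqrt)ᴴ = hρc.sqrt := hρc.posSemidef_sqrt.isHermitian
  set Q : Matrix (Fin N) (Fin N) ℂ := T * ρ.map (starRingEnd ℂ) * Tᴴ with hQdef
  have hQps : Q.PosSemidef := hQdef ▸ hρc.mul_mul_conjTranspose_same T
  -- the target PSD matrix is √ρ Q √ρ
  have hW : (hρ.sqrt * T * hρc.sqrt) * (hρ.sqrt * T * hρc.sqrt)ᴴ =
      hρ.sqrt * Q * hρ.sqrt := by
    have hBBX : ∀ X : Matrix (Fin N) (Fin N) ℂ,
        hρc.sqrt * (hρc.sqrt * X) = ρ.map (starRingEnd ℂ) * X := fun X => by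
      rw [← mul_assoc, hB2]
    rw [hQdef, Matrix.conjTranspose_mul, Matrix.conjTranspose_mul, hBH, hAH.eq]
    simp only [mul_assoc, hBBX]
  have hRW : R = hρ.sqrt * hρ.sqrt * Q := by rw [hR, hA2]
  clear_value Q
  clear hQdef hR
  -- spectral decomposition of √ρ
  set U : Matrix (Fin N) (Fin N) ℂ := (hAH.eigenvectorUnitary : Matrix (Fin N) (Fin N) ℂ)
    with hUdef
  set dd : Fin N → ℝ := hAH.eigenvalues with hddef
  have hU1 : U * Uᴴ = 1 := by
    rw [hUdef]
    simpa [Matrix.star_eq_conjTranspose] using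
      (Matrix.mem_unitaryGroup_iff).mp hAH.eigenvectorUnitary.2
  have hU2 : Uᴴ * U = 1 := by
    rw [hUdef]
    simpa [Matrix.star_eq_conjTranspose] using
      (Matrix.mem_unitaryGroup_iff').mp hAH.eigenvectorUnitary.2
  have hAspec : hρ.sqrt = U * Matrix.diagonal (fun i => (dd i : ℂ)) * Uᴴ := by
    rw [hUdef, hddef]
    exact hAH.spectral_theorem
  clear_value U dd
  have hUX : ∀ X : Matrix (Fin N) (Fin N) ℂ, Uᴴ * (U * X) = X := fun X => by
    rw [← mul_assoc, hU2, one_mul]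
  set Q₀ : Matrix (Fin N) (Fin N) ℂ := Uᴴ * Q * U with hQ₀def
  have hQ₀ps : Q₀.PosSemidef := by
    have h := hQps.mul_mul_conjTranspose_same Uᴴ
    rw [Matrix.conjTranspose_conjTranspose] at h
    exact hQ₀def ▸ h
  clear_value Q₀
  obtain ⟨S₀, hS₀det, hS₀⟩ := diag_sq_similar dd Q₀ hQ₀ps
  set D : Matrix (Fin N) (Fin N) ℂ := Matrix.diagonal (fun i => (dd i : ℂ)) with hDdef
  clear_value D
  have hRU : R = U * (D * D * Q₀) * Uᴴ := by
    rw [hRW, hAspec, hQ₀def]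
    simp only [mul_assoc, hUX, hU1, mul_one]
  have hWU : hρ.sqrt * Q * hρ.sqrt = U * (D * Q₀ * D) * Uᴴ := by
    rw [hAspec, hQ₀def]
    simp only [mul_assoc, hUX, hU1, mul_one]
  have hUdet : IsUnit U.det := Matrix.isUnit_det_of_right_inverse hU1
  have hUHdet : IsUnit (Uᴴ).det := Matrix.isUnit_det_of_right_inverse hU2
  have hSdet : IsUnit (U * S₀ * Uᴴ).det := by
    rw [Matrix.det_mul, Matrix.det_mul]
    exact (hUdet.mul hS₀det).mul hUHdet
  have hSinv : (U * S₀ * Uᴴ)⁻¹ = U * S₀⁻¹ * Uᴴ := by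
    apply Matrix.inv_eq_right_inv
    have hS₀inv : S₀ * S₀⁻¹ = 1 := Matrix.mul_nonsing_inv _ hS₀det
    calc (U * S₀ * Uᴴ) * (U * S₀⁻¹ * Uᴴ)
        = U * (S₀ * (Uᴴ * (U * (S₀⁻¹ * Uᴴ)))) := by simp only [mul_assoc]
      _ = U * (S₀ * (S₀⁻¹ * Uᴴ)) := by rw [hUX]
      _ = U * ((S₀ * S₀⁻¹) * Uᴴ) := by rw [← mul_assoc S₀ S₀⁻¹ Uᴴ]
      _ = 1 := by rw [hS₀inv, one_mul, hU1]
  have hsim : R = (U * S₀ * Uᴴ) *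
      ((hρ.sqrt * T * hρc.sqrt) * (hρ.sqrt * T * hρc.sqrt)ᴴ) * (U * S₀ * Uᴴ)⁻¹ := by
    rw [hW, hSinv, hRU, hWU, hS₀]
    simp only [mul_assoc, hUX]
  refine ⟨?_, ⟨U * S₀ * Uᴴ, hSdet, hsim⟩⟩
  -- eigenvalues are nonnegative reals
  intro μ hμ
  have hWps : ((hρ.sqrt * T * hρc.sqrt) * (hρ.sqrt * T * hρc.sqrt)ᴴ).PosSemidef :=
    Matrix.posSemidef_self_mul_conjTranspose _
  set Wm : Matrix (Fin N) (Fin N) ℂ :=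
    (hρ.sqrt * T * hρc.sqrt) * (hρ.sqrt * T * hρc.sqrt)ᴴ with hWmdef
  clear_value Wm
  set Sm : Matrix (Fin N) (Fin N) ℂ := U * S₀ * Uᴴ with hSmdef
  clear_value Sm
  rw [spectrum.mem_iff] at hμ
  have hdet : (μ • (1 : Matrix (Fin N) (Fin N) ℂ) - R).det = 0 := by
    by_contra h
    refine hμ ?_
    rw [Algebra.algebraMap_eq_smul_one]
    exact (Matrix.isUnit_iff_isUnit_det _).mpr (isUnit_iff_ne_zero.mpr h)
  have hcomm : μ • (1 : Matrix (Fin N) (Fin N) ℂ) - R =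
      Sm * (μ • 1 - Wm) * Sm⁻¹ := by
    have h1 : Sm * (μ • (1 : Matrix (Fin N) (Fin N) ℂ)) * Sm⁻¹ = μ • 1 := by
      rw [mul_smul_comm, mul_one, smul_mul_assoc, Matrix.mul_nonsing_inv _ hSdet]
    rw [mul_sub, sub_mul, h1, ← hsim]
  have hdetW : (μ • (1 : Matrix (Fin N) (Fin N) ℂ) - Wm).det = 0 := by
    have h2 : (μ • (1 : Matrix (Fin N) (Fin N) ℂ) - R).det =
        (μ • (1 : Matrix (Fin N) (Fin N) ℂ) - Wm).det := by
      rw [hcomm, Matrix.det_mul, Matrix.det_mul, Matrix.det_nonsing_inv,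
        mul_comm Sm.det _, mul_assoc, Ring.mul_inverse_cancel _ hSdet, mul_one]
    rw [← h2, hdet]
  obtain ⟨v, hv0, hv⟩ := (Matrix.exists_mulVec_eq_zero_iff).mpr hdetW
  have hWv : Wm *ᵥ v = μ • v := by
    rw [Matrix.sub_mulVec, Matrix.smul_mulVec, Matrix.one_mulVec] at hv
    exact (sub_eq_zero.mp hv).symm
  have hpos := hWps.dotProduct_mulVec_nonneg v
  rw [hWv, dotProduct_smul, smul_eq_mul] at hpos
  have hc : 0 < dotProduct (star v) v :=
    dotProduct_star_self_pos_iff.mpr hv0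
  rw [Complex.lt_def] at hc
  rw [Complex.le_def] at hpos
  obtain ⟨hc1, hc2⟩ := hc
  obtain ⟨hp1, hp2⟩ := hpos
  simp only [Complex.zero_re, Complex.zero_im, Complex.mul_re, Complex.mul_im] at hc1 hc2 hp1 hp2
  rw [← hc2, mul_zero, sub_zero] at hp1
  rw [← hc2, mul_zero, zero_add] at hp2
  refine ⟨μ.re, (mul_nonneg_iff_of_pos_right hc1).mp hp1, ?_⟩
  have him : μ.im = 0 := by
    rcases mul_eq_zero.mp hp2.symm with h | h
    · exact h
    · exact absurd h (ne_of_gt hc1)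
  apply Complex.ext <;> simp [him]
end

section
/- Let r₁, r₂, r₃ > 0 with r₁ + r₂ + r₃ = 1, and let s₁, s₂, s₃ ≥ 0 satisfy r₁r₂r₃ ≥ r₁s₁ + r₂s₂ + r₃s₃. Then s₁ + s₂ + s₃ < 1/4. -/
private lemma aux9 (r₁ r₂ r₃ s₁ s₂ s₃ : ℝ)
    (hr₁ : 0 < r₁) (hr₂ : 0 < r₂) (hr₃ : 0 < r₃)
    (hsum : r₁ + r₂ + r₃ = 1)
    (hs₁ : 0 ≤ s₁) (hs₂ : 0 ≤ s₂) (hs₃ : 0 ≤ s₃)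
    (hmain : r₁ * s₁ + r₂ * s₂ + r₃ * s₃ ≤ r₁ * r₂ * r₃)
    (h12 : r₁ ≤ r₂) (h13 : r₁ ≤ r₃) :
    s₁ + s₂ + s₃ < 1 / 4 := by
  have h1 : r₁ * (s₁ + s₂ + s₃) ≤ r₁ * s₁ + r₂ * s₂ + r₃ * s₃ := by nlinarith
  have h2a : r₂ * r₃ < 1/4 := by nlinarith [sq_nonneg (r₂ - r₃)]
  have h2 : r₁ * r₂ * r₃ < r₁ * (1/4) := by
    have := mul_lt_mul_of_pos_left h2a hr₁
    nlinarith
  have := lt_of_le_of_lt (h1.trans hmain) h2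
  exact lt_of_mul_lt_mul_left this hr₁.le

/-- If r₁,r₂,r₃ > 0 sum to 1 and s₁,s₂,s₃ ≥ 0 satisfy
r₁r₂r₃ ≥ r₁s₁ + r₂s₂ + r₃s₃, then s₁ + s₂ + s₃ < 1/4. -/
theorem stmt9 (r₁ r₂ r₃ s₁ s₂ s₃ : ℝ)
    (hr₁ : 0 < r₁) (hr₂ : 0 < r₂) (hr₃ : 0 < r₃)
    (hsum : r₁ + r₂ + r₃ = 1)
    (hs₁ : 0 ≤ s₁) (hs₂ : 0 ≤ s₂) (hs₃ : 0 ≤ s₃)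
    (hmain : r₁ * s₁ + r₂ * s₂ + r₃ * s₃ ≤ r₁ * r₂ * r₃) :
    s₁ + s₂ + s₃ < 1 / 4 := by
  rcases le_total r₁ r₂ with h12 | h21
  · rcases le_total r₁ r₃ with h13 | h31
    · exact aux9 r₁ r₂ r₃ s₁ s₂ s₃ hr₁ hr₂ hr₃ hsum hs₁ hs₂ hs₃ hmain h12 h13
    · have := aux9 r₃ r₁ r₂ s₃ s₁ s₂ hr₃ hr₁ hr₂ (by linarith) hs₃ hs₁ hs₂
        (by nlinarith) h31 (h31.trans h12)
      linarith
  · rcases le_total r₂ r₃ with h23 | h32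
    · have := aux9 r₂ r₃ r₁ s₂ s₃ s₁ hr₂ hr₃ hr₁ (by linarith) hs₂ hs₃ hs₁
        (by nlinarith) h23 h21
      linarith
    · have := aux9 r₃ r₁ r₂ s₃ s₁ s₂ hr₃ hr₁ hr₂ (by linarith) hs₃ hs₁ hs₂
        (by nlinarith) (h32.trans h21) h32
      linarith
end

section
/- Let ρ be a 3×3 Hermitian positive semidefinite matrix with Tr ρ = 1, written in a basis where its real part is diagonal: ρ = diag(λ₁,λ₂,λ₃) + i·(antisymmetric part with entries ±v₁,±v₂,±v₃ as in ρ₂₃ = −iv₁, ρ₁₃ = iv₂, ρ₁₂ = −iv₃). Assume λ₁ ≥ λ₂ ≥ λ₃ > 0 and det ρ > 0, and set q₁ = λ₂+λ₃−λ₁, q₂ = λ₁+λ₃−λ₂, q₃ = λ₁+λ₂−λ₃ (so q₂, q₃ > 0 and q₁+q₂+q₃ = 1). If q₁q₂q₃ > 4q₁q₂v₃² + 4q₁q₃v₂² + 4q₂q₃v₁², then q₁q₂ + q₁q₃ + q₂q₃ > 4(q₁+q₂)v₃² + 4(q₁+q₃)v₂² + 4(q₂+q₃)v₁². -/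
open Matrix Complex
open scoped ComplexOrder

/-- For a spin-1 density matrix ρ in canonical form (real part diagonal),
with λ₁ ≥ λ₂ ≥ λ₃ > 0, Tr ρ = 1, det ρ > 0, setting q₁ = λ₂+λ₃−λ₁,
q₂ = λ₁+λ₃−λ₂, q₃ = λ₁+λ₂−λ₃: if q₁q₂q₃ > 4q₁q₂v₃² + 4q₁q₃v₂² + 4q₂q₃v₁²,
then q₁q₂ + q₁q₃ + q₂q₃ > 4(q₁+q₂)v₃² + 4(q₁+q₃)v₂² + 4(q₂+q₃)v₁². -/
theorem stmt18 (l₁ l₂ l₃ v₁ v₂ v₃ : ℝ)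
    (hord : l₃ ≤ l₂ ∧ l₂ ≤ l₁) (hpos : 0 < l₃) (htr : l₁ + l₂ + l₃ = 1)
    (ρ : Matrix (Fin 3) (Fin 3) ℂ)
    (hρ : ρ = !![(l₁ : ℂ), -I * v₃, I * v₂;
                 I * v₃, (l₂ : ℂ), -I * v₁;
                 -I * v₂, I * v₁, (l₃ : ℂ)])
    (hpsd : ρ.PosSemidef) (hdet : 0 < ρ.det.re)
    (q₁ q₂ q₃ : ℝ)
    (hq₁ : q₁ = l₂ + l₃ - l₁) (hq₂ : q₂ = l₁ + l₃ - l₂) (hq₃ : q₃ = l₁ + l₂ - l₃)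
    (hmain : 4 * q₁ * q₂ * v₃ ^ 2 + 4 * q₁ * q₃ * v₂ ^ 2 + 4 * q₂ * q₃ * v₁ ^ 2
        < q₁ * q₂ * q₃) :
    4 * (q₁ + q₂) * v₃ ^ 2 + 4 * (q₁ + q₃) * v₂ ^ 2 + 4 * (q₂ + q₃) * v₁ ^ 2
      < q₁ * q₂ + q₁ * q₃ + q₂ * q₃ := by
  obtain ⟨h32, h21⟩ := hord
  subst hq₁ hq₂ hq₃
  have hl2 : 0 < l₂ := lt_of_lt_of_le hpos h32
  have hl1 : 0 < l₁ := lt_of_lt_of_le hl2 h21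
  have hd : ρ.det.re = l₁*l₂*l₃ - l₁*v₁^2 - l₂*v₂^2 - l₃*v₃^2 := by
    subst hρ
    simp [Matrix.det_fin_three, Complex.ext_iff]
    ring
  rw [hd] at hdet
  have hq2 : 0 < l₁ + l₃ - l₂ := by linarith
  have hq3 : 0 < l₁ + l₂ - l₃ := by linarith
  rcases le_or_gt 0 (l₂ + l₃ - l₁) with h1 | h1
  · have id1 : (l₂ + l₃ - l₁) * (l₁ + l₃ - l₂) + (l₂ + l₃ - l₁) * (l₁ + l₂ - l₃)
        + (l₁ + l₃ - l₂) * (l₁ + l₂ - l₃)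
        - (4 * (l₂ + l₃ - l₁ + (l₁ + l₃ - l₂)) * v₃ ^ 2
          + 4 * (l₂ + l₃ - l₁ + (l₁ + l₂ - l₃)) * v₂ ^ 2
          + 4 * (l₁ + l₃ - l₂ + (l₁ + l₂ - l₃)) * v₁ ^ 2)
        = (l₂ + l₃ - l₁) * (l₁ + l₃ - l₂) * (l₁ + l₂ - l₃)
          + 8 * (l₁ * l₂ * l₃ - l₁ * v₁ ^ 2 - l₂ * v₂ ^ 2 - l₃ * v₃ ^ 2) := by
      linear_combination ((l₁ + l₂ + l₃) ^ 2 - 4 * (l₁ * l₂ + l₁ * l₃ + l₂ * l₃)) * htr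
    nlinarith [id1, hdet, mul_nonneg (mul_nonneg h1 hq2.le) hq3.le]
  · exfalso
    have hA : 4*l₁*l₂ ≤ l₁ + l₂ - l₃ := by nlinarith [mul_pos hq2 (neg_pos.2 h1)]
    have hB : 4*l₁*l₃ ≤ l₁ + l₃ - l₂ := by nlinarith [mul_pos hq3 (neg_pos.2 h1)]
    have key : (l₁+l₃-l₂)*(l₁+l₂-l₃) < 4*(l₁+l₃-l₂)*v₃^2 + 4*(l₁+l₂-l₃)*v₂^2 := by
      nlinarith [mul_nonneg (mul_nonneg hq2.le hq3.le) (sq_nonneg v₁)]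
    have hlll : 0 < l₁*l₂*l₃ := mul_pos (mul_pos hl1 hl2) hpos
    nlinarith [mul_lt_mul_of_pos_right key hlll,
      mul_le_mul_of_nonneg_right hA (mul_nonneg (mul_nonneg hq2.le hpos.le) (sq_nonneg v₃)),
      mul_le_mul_of_nonneg_right hB (mul_nonneg (mul_nonneg hq3.le hl2.le) (sq_nonneg v₂)),
      mul_lt_mul_of_pos_left hdet (mul_pos hq2 hq3),
      mul_nonneg (mul_nonneg (mul_nonneg hq2.le hq3.le) hl1.le) (sq_nonneg v₁)]
end
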